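/- If f is curved, then for every u* ∈ ∂C(0) the set SSAT({u*},{1}) is nonempty and compact. -/

import Mathlib

open MeasureTheory Filter Set
open scoped Classical

noncomputable section

/-- The ambient space `ℝ^N` with the Euclidean structure. -/
abbrev Euc (N : ℕ) := EuclideanSpace ℝ (Fin N)

variable {N : ℕ}

/-- The cell `C((k_i))` : points whose coordinates in the basis `ψ` satisfy
`τ(k_i - 1/2) ≤ u_i ≤ τ(k_i + 1/2)`. -/
def cube (ψ : Module.Basis (Fin N) ℝ (Euc N)) (τ : ℝ) (k : Fin N → ℤ) : Set (Euc N) :=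
  {u | ∀ i, τ * ((k i : ℝ) - 1/2) ≤ ψ.repr u i ∧ ψ.repr u i ≤ τ * ((k i : ℝ) + 1/2)}

/-- The central cell `C(0)`. -/
def cube0 (ψ : Module.Basis (Fin N) ℝ (Euc N)) (τ : ℝ) : Set (Euc N) := cube ψ τ 0

/-- The set of active (saturated) coordinates `J(u)` for `u ∈ C(0)`. -/
def Jset (ψ : Module.Basis (Fin N) ℝ (Euc N)) (τ : ℝ) (u : Euc N) : Set (Fin N) :=
  {i | ψ.repr u i = τ / 2 ∨ ψ.repr u i = -(τ / 2)}

/-- `sol` is the solution map of the problems `(P)(u)` : `sol u` minimizes `f(v - u)` over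
`C(0)`.  (Under the hypotheses on `f` the minimizer is unique.) -/
def IsSol (ψ : Module.Basis (Fin N) ℝ (Euc N)) (τ : ℝ) (f : Euc N → ℝ) (sol : Euc N → Euc N) : Prop :=
  ∀ u, sol u ∈ cube0 ψ τ ∧ IsMinOn (fun v => f (v - u)) (cube0 ψ τ) (sol u)

/-- `SSAT(C, A)` : the set of data `u` whose solution `sol u` lies in `C` and with
`f_d(u - sol u) ∈ A`. -/
def SSAT (sol : Euc N → Euc N) (fd : Euc N → ℝ) (C : Set (Euc N)) (A : Set ℝ) : Set (Euc N) :=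
  {u | sol u ∈ C ∧ fd (u - sol u) ∈ A}

/-- `f` is a norm. -/
structure IsNormLike (f : Euc N → ℝ) : Prop where
  add_le : ∀ x y, f (x + y) ≤ f x + f y
  smul_eq : ∀ (c : ℝ) (x), f (c • x) = |c| * f x
  eq_zero_iff : ∀ x, f x = 0 ↔ x = 0

/-- `f` is a norm, continuously differentiable away from `0`, with strictly convex
level sets. -/
structure GoodNorm (f : Euc N → ℝ) : Prop where
  add_le : ∀ x y, f (x + y) ≤ f x + f y
  smul_eq : ∀ (c : ℝ) (x), f (c • x) = |c| * f x
  eq_zero_iff : ∀ x, f x = 0 ↔ x = 0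
  smooth : ∀ x : Euc N, x ≠ 0 → ContDiffAt ℝ 1 f x
  sconv : StrictConvex ℝ {x : Euc N | f x ≤ 1}

/-- `f` is curved : the normalized-gradient map `h : {f = 1} → S^{N-1}`,
`h(u) = ∇f(u)/‖∇f(u)‖₂`, is a bijection whose inverse is Lipschitz. -/
def Curved (f : Euc N → ℝ) : Prop :=
  ∃ (L : NNReal) (g : Euc N → Euc N),
    LipschitzOnWith L g (Metric.sphere (0 : Euc N) 1) ∧
    (∀ u : Euc N, f u = 1 → g (‖gradient f u‖⁻¹ • gradient f u) = u) ∧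
    ∀ w ∈ Metric.sphere (0 : Euc N) 1, ∃ u, f u = 1 ∧ ‖gradient f u‖⁻¹ • gradient f u = w

/-- The projection `p` onto `Span(ψ_j : j ∈ J)` along the other basis vectors. -/
def pJ (ψ : Module.Basis (Fin N) ℝ (Euc N)) (J : Set (Fin N)) (x : Euc N) : Euc N :=
  ∑ j : Fin N, if j ∈ J then ψ.repr x j • ψ j else 0

/-- The "center" `u^c` of the face of `u` : keep the saturated coordinates, zero out
the others. -/
def ucOf (ψ : Module.Basis (Fin N) ℝ (Euc N)) (τ : ℝ) (u : Euc N) : Euc N :=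
  pJ ψ (Jset ψ τ u) u

/-- The equivalence class `ū` of `u` in `C(0)` : same active set. -/
def ubar (ψ : Module.Basis (Fin N) ℝ (Euc N)) (τ : ℝ) (u : Euc N) : Set (Euc N) :=
  {w ∈ cube0 ψ τ | Jset ψ τ w = Jset ψ τ u}

/-- The discrete grid `D = τ ℤ^N` (in the basis `ψ`). -/
def Dgrid (ψ : Module.Basis (Fin N) ℝ (Euc N)) (τ : ℝ) : Set (Euc N) :=
  {x | ∃ k : Fin N → ℤ, x = ∑ i, (τ * (k i : ℝ)) • ψ i}

/-- The slice `Dom((k_j)_{j∈J})` of the grid : grid points whose `J`-coordinates are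
the prescribed `τ k_j`. -/
def DomSlice (ψ : Module.Basis (Fin N) ℝ (Euc N)) (τ : ℝ) (J : Set (Fin N)) (k : Fin N → ℤ) :
    Set (Euc N) :=
  {x ∈ Dgrid ψ τ | ∀ j ∈ J, ψ.repr x j = τ * (k j : ℝ)}

/-- The grid `τ ℤ^J` inside `Span(ψ_j : j ∈ J)`. -/
def JgridJ (ψ : Module.Basis (Fin N) ℝ (Euc N)) (τ : ℝ) (J : Set (Fin N)) : Set (Euc N) :=
  {x | ∃ k : Fin N → ℤ, x = ∑ j : Fin N, if j ∈ J then (τ * (k j : ℝ)) • ψ j else 0}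

/-- `Leb_K(S)` : the Lebesgue measure (in `ℝ^{#J}`) of the set of `J`-indexed coordinate
families whose combination lies in `S`. -/
def lebJ (ψ : Module.Basis (Fin N) ℝ (Euc N)) (J : Set (Fin N)) (S : Set (Euc N)) : ENNReal :=
  volume {a : ↥J → ℝ | (∑ j : ↥J, a j • ψ (j : Fin N)) ∈ S}

/-- The set `C_K` of centers of the faces of codimension `K`. -/
def CKset (ψ : Module.Basis (Fin N) ℝ (Euc N)) (τ : ℝ) (K : ℕ) : Set (Euc N) :=
  {x | ∃ (J : Set (Fin N)) (ε : Fin N → ℝ), J.ncard = K ∧ (∀ j ∈ J, ε j = 1 ∨ ε j = -1) ∧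
    x = ∑ j : Fin N, if j ∈ J then (ε j * (τ / 2)) • ψ j else 0}

/-- The set `Cl_K` of boundary points of `C(0)` with exactly `K` active constraints. -/
def ClKset (ψ : Module.Basis (Fin N) ℝ (Euc N)) (τ : ℝ) (K : ℕ) : Set (Euc N) :=
  {u | u ∈ frontier (cube0 ψ τ) ∧ (Jset ψ τ u).ncard = K}

/-- `k_i(u)` : the unique integer with `τ(k_i - 1/2) ≤ u_i < τ(k_i + 1/2)`. -/
def kfun (ψ : Module.Basis (Fin N) ℝ (Euc N)) (τ : ℝ) (u : Euc N) (i : Fin N) : ℤ :=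
  ⌊ψ.repr u i / τ + 1 / 2⌋

/-- The grid point `τ Σ k_i(u) ψ_i` approximating `u`. -/
def gridpt (ψ : Module.Basis (Fin N) ℝ (Euc N)) (τ : ℝ) (u : Euc N) : Euc N :=
  ∑ i, (τ * (kfun ψ τ u i : ℝ)) • ψ i

/-- `J̃(u)` : the active set of the solution of `(P)` at the grid point of `u`. -/
def Jtil (ψ : Module.Basis (Fin N) ℝ (Euc N)) (τ : ℝ) (sol : Euc N → Euc N) (u : Euc N) :
    Set (Fin N) :=
  Jset ψ τ (sol (gridpt ψ τ u))


section StmtFourHelpers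

variable {N : ℕ}

lemma nl_zero {f : Euc N → ℝ} (hn : IsNormLike f) : f 0 = 0 :=
  (hn.eq_zero_iff 0).mpr rfl

lemma nl_neg {f : Euc N → ℝ} (hn : IsNormLike f) (x : Euc N) : f (-x) = f x := by
  have h := hn.smul_eq (-1) x
  simpa using h

lemma nl_nonneg {f : Euc N → ℝ} (hn : IsNormLike f) (x : Euc N) : 0 ≤ f x := by
  have h := hn.add_le x (-x)
  rw [add_neg_cancel, nl_zero hn, nl_neg hn] at h
  linarith

lemma nl_pos {f : Euc N → ℝ} (hn : IsNormLike f) {x : Euc N} (hx : x ≠ 0) : 0 < f x :=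
  lt_of_le_of_ne (nl_nonneg hn x) (fun h => hx ((hn.eq_zero_iff x).mp h.symm))

lemma nl_sum_le {f : Euc N → ℝ} (hn : IsNormLike f) {ι : Type*} (s : Finset ι) (g : ι → Euc N) :
    f (∑ i ∈ s, g i) ≤ ∑ i ∈ s, f (g i) := by
  classical
  induction s using Finset.cons_induction with
  | empty => simp [nl_zero hn]
  | cons a s ha ih =>
    rw [Finset.sum_cons, Finset.sum_cons]
    exact (hn.add_le _ _).trans (by linarith)

lemma nl_bound (ψ : Module.Basis (Fin N) ℝ (Euc N)) {f : Euc N → ℝ} (hn : IsNormLike f) :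
    ∃ C : ℝ, ∀ x, f x ≤ C * ‖x‖ := by
  classical
  set L : Fin N → (Euc N →L[ℝ] ℝ) := fun i => LinearMap.toContinuousLinearMap (ψ.coord i)
    with hL
  refine ⟨∑ i, ‖L i‖ * f (ψ i), fun x => ?_⟩
  calc f x = f (∑ i, ψ.repr x i • ψ i) := by rw [ψ.sum_repr x]
    _ ≤ ∑ i, f (ψ.repr x i • ψ i) := nl_sum_le hn _ _
    _ ≤ ∑ i, (‖L i‖ * f (ψ i)) * ‖x‖ := by
        apply Finset.sum_le_sum
        intro i _
        rw [hn.smul_eq]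
        have h1 : |ψ.repr x i| ≤ ‖L i‖ * ‖x‖ := by
          have h := (L i).le_opNorm x
          simpa [hL, Real.norm_eq_abs, Module.Basis.coord_apply] using h
        have h2 : 0 ≤ f (ψ i) := nl_nonneg hn _
        nlinarith [abs_nonneg (ψ.repr x i), norm_nonneg x]
    _ = (∑ i, ‖L i‖ * f (ψ i)) * ‖x‖ := by rw [Finset.sum_mul]

lemma nl_continuous (ψ : Module.Basis (Fin N) ℝ (Euc N)) {f : Euc N → ℝ} (hn : IsNormLike f) :
    Continuous f := by
  obtain ⟨C, hC⟩ := nl_bound ψ hn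
  have key : ∀ x y : Euc N, dist (f x) (f y) ≤ (Real.toNNReal C) * dist x y := by
    intro x y
    have h1 : f x - f y ≤ f (x - y) := by
      have h := hn.add_le (x - y) y
      rw [sub_add_cancel] at h
      linarith
    have h2 : f y - f x ≤ f (x - y) := by
      have h := hn.add_le (y - x) x
      rw [sub_add_cancel] at h
      have hneg : f (y - x) = f (x - y) := by
        rw [← nl_neg hn (x - y)]; congr 1; abel
      linarith
    have h3 : f (x - y) ≤ C * ‖x - y‖ := hC _
    have h4 : (C : ℝ) ≤ (Real.toNNReal C : ℝ) := by
      rw [Real.coe_toNNReal']; exact le_max_left _ _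
    have h5 : (0:ℝ) ≤ ‖x - y‖ := norm_nonneg _
    rw [Real.dist_eq, dist_eq_norm, abs_sub_le_iff]
    constructor <;> nlinarith
  exact (LipschitzWith.of_dist_le_mul key).continuous

lemma nl_lower (hN : 1 ≤ N) (ψ : Module.Basis (Fin N) ℝ (Euc N)) {f : Euc N → ℝ}
    (hn : IsNormLike f) : ∃ c : ℝ, 0 < c ∧ ∀ x, c * ‖x‖ ≤ f x := by
  have hnt : Nontrivial (Euc N) := nontrivial_of_ne (ψ ⟨0, hN⟩) 0 (ψ.ne_zero _)
  have hsne : (Metric.sphere (0 : Euc N) 1).Nonempty :=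
    NormedSpace.sphere_nonempty.mpr zero_le_one
  obtain ⟨x0, hx0mem, hx0min⟩ := (isCompact_sphere (0:Euc N) 1).exists_isMinOn hsne
      ((nl_continuous ψ hn).continuousOn)
  have hx0norm : ‖x0‖ = 1 := by simpa using hx0mem
  have hx0ne : x0 ≠ 0 := by
    intro h; rw [h] at hx0norm; simp at hx0norm
  refine ⟨f x0, nl_pos hn hx0ne, fun x => ?_⟩
  rcases eq_or_ne x 0 with rfl | hx
  · simp [nl_zero hn]
  · have hxn : (0:ℝ) < ‖x‖ := norm_pos_iff.mpr hx
    have hmem : ‖x‖⁻¹ • x ∈ Metric.sphere (0:Euc N) 1 := by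
      rw [mem_sphere_zero_iff_norm, norm_smul, Real.norm_eq_abs,
        abs_of_pos (inv_pos.mpr hxn), inv_mul_cancel₀ hxn.ne']
    have hxdec : x = ‖x‖ • (‖x‖⁻¹ • x) := by
      rw [smul_smul, mul_inv_cancel₀ hxn.ne', one_smul]
    have hfx : f x = ‖x‖ * f (‖x‖⁻¹ • x) := by
      conv_lhs => rw [hxdec]
      rw [hn.smul_eq, abs_of_pos hxn]
    have hmin := isMinOn_iff.mp hx0min _ hmem
    rw [hfx]
    nlinarith

lemma repr_continuous (ψ : Module.Basis (Fin N) ℝ (Euc N)) (i : Fin N) :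
    Continuous fun u : Euc N => (ψ.repr u i : ℝ) := by
  have h : Continuous (ψ.coord i) := LinearMap.continuous_of_finiteDimensional _
  have he : (fun u : Euc N => (ψ.repr u i : ℝ)) = ψ.coord i := by
    ext u; simp [Module.Basis.coord_apply]
  rw [he]; exact h

lemma mem_cube0_iff (ψ : Module.Basis (Fin N) ℝ (Euc N)) (τ : ℝ) (u : Euc N) :
    u ∈ cube0 ψ τ ↔ ∀ i, -(τ/2) ≤ ψ.repr u i ∧ ψ.repr u i ≤ τ/2 := by
  unfold cube0 cube
  simp only [Set.mem_setOf_eq, Pi.zero_apply, Int.cast_zero]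
  constructor <;> intro h i <;> have hh := h i <;>
    exact ⟨by linarith [hh.1, hh.2], by linarith [hh.1, hh.2]⟩

lemma cube0_convex (ψ : Module.Basis (Fin N) ℝ (Euc N)) (τ : ℝ) : Convex ℝ (cube0 ψ τ) := by
  intro x hx y hy a b ha hb hab
  rw [mem_cube0_iff]
  intro i
  have hxi := (mem_cube0_iff ψ τ x).mp hx i
  have hyi := (mem_cube0_iff ψ τ y).mp hy i
  have hrepr : ψ.repr (a • x + b • y) i = a * ψ.repr x i + b * ψ.repr y i := by
    simp [map_add, _root_.map_smul]
  rw [hrepr]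
  have h1 : a * (-(τ/2)) ≤ a * ψ.repr x i := mul_le_mul_of_nonneg_left hxi.1 ha
  have h2 : b * (-(τ/2)) ≤ b * ψ.repr y i := mul_le_mul_of_nonneg_left hyi.1 hb
  have h3 : a * ψ.repr x i ≤ a * (τ/2) := mul_le_mul_of_nonneg_left hxi.2 ha
  have h4 : b * ψ.repr y i ≤ b * (τ/2) := mul_le_mul_of_nonneg_left hyi.2 hb
  have h5 : a * (τ/2) + b * (τ/2) = τ/2 := by rw [← add_mul, hab, one_mul]
  have h6 : a * (-(τ/2)) + b * (-(τ/2)) = -(τ/2) := by rw [← add_mul, hab, one_mul]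
  constructor <;> linarith

lemma cube0_closed (ψ : Module.Basis (Fin N) ℝ (Euc N)) (τ : ℝ) : IsClosed (cube0 ψ τ) := by
  have heq : cube0 ψ τ = ⋂ i, ((fun u : Euc N => ψ.repr u i) ⁻¹' Set.Icc (-(τ/2)) (τ/2)) := by
    ext u
    simp only [Set.mem_iInter, Set.mem_preimage, Set.mem_Icc, mem_cube0_iff]
  rw [heq]
  exact isClosed_iInter fun i => IsClosed.preimage (repr_continuous ψ i) isClosed_Icc

lemma frontier_mem_cube0 {ψ : Module.Basis (Fin N) ℝ (Euc N)} {τ : ℝ} {us : Euc N}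
    (hus : us ∈ frontier (cube0 ψ τ)) : us ∈ cube0 ψ τ := by
  have h := frontier_subset_closure hus
  rwa [(cube0_closed ψ τ).closure_eq] at h

lemma frontier_saturated (ψ : Module.Basis (Fin N) ℝ (Euc N)) {τ : ℝ} {us : Euc N}
    (hus : us ∈ frontier (cube0 ψ τ)) :
    ∃ i, ψ.repr us i = τ/2 ∨ ψ.repr us i = -(τ/2) := by
  have hmem := frontier_mem_cube0 hus
  by_contra h
  push_neg at h
  have hstrict : us ∈ {u : Euc N | ∀ i, -(τ/2) < ψ.repr u i ∧ ψ.repr u i < τ/2} := by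
    intro i
    have hb := (mem_cube0_iff ψ τ us).mp hmem i
    have hi := h i
    exact ⟨lt_of_le_of_ne hb.1 (Ne.symm hi.2), lt_of_le_of_ne hb.2 hi.1⟩
  have hop : IsOpen {u : Euc N | ∀ i, -(τ/2) < ψ.repr u i ∧ ψ.repr u i < τ/2} := by
    have heq : {u : Euc N | ∀ i, -(τ/2) < ψ.repr u i ∧ ψ.repr u i < τ/2}
        = ⋂ i, ((fun u : Euc N => ψ.repr u i) ⁻¹' Set.Ioo (-(τ/2)) (τ/2)) := by
      ext u
      simp only [Set.mem_iInter, Set.mem_preimage, Set.mem_Ioo, Set.mem_setOf_eq]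
    rw [heq]
    exact isOpen_iInter_of_finite fun i => IsOpen.preimage (repr_continuous ψ i) isOpen_Ioo
  have hsub : {u : Euc N | ∀ i, -(τ/2) < ψ.repr u i ∧ ψ.repr u i < τ/2} ⊆ cube0 ψ τ :=
    fun u hu => (mem_cube0_iff _ _ _).mpr fun i => ⟨(hu i).1.le, (hu i).2.le⟩
  exact hus.2 (interior_maximal hsub hop hstrict)

lemma interior_ball_lt {f : Euc N → ℝ} (hn : IsNormLike f) {z : Euc N}
    (hz : z ∈ interior {x : Euc N | f x ≤ 1}) : f z < 1 := by
  rcases Metric.isOpen_iff.mp isOpen_interior z hz with ⟨ε, hε, hball⟩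
  have hsub : Metric.ball z ε ⊆ {x : Euc N | f x ≤ 1} := hball.trans interior_subset
  by_contra h
  push_neg at h
  have hzne : z ≠ 0 := by
    intro h0; rw [h0, nl_zero hn] at h; linarith
  have hzn : (0:ℝ) < ‖z‖ := norm_pos_iff.mpr hzne
  set δ := ε / (2 * ‖z‖) with hδ
  have hδpos : 0 < δ := by positivity
  have hδn : δ * ‖z‖ = ε / 2 := by
    rw [hδ]; field_simp
  have hmem : (1 + δ) • z ∈ Metric.ball z ε := by
    rw [Metric.mem_ball, dist_eq_norm]
    have he : (1 + δ) • z - z = δ • z := by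
      rw [add_smul, one_smul]; abel
    rw [he, norm_smul, Real.norm_eq_abs, abs_of_pos hδpos, hδn]
    linarith
  have hle : f ((1 + δ) • z) ≤ 1 := hsub hmem
  rw [hn.smul_eq, abs_of_pos (by linarith : (0:ℝ) < 1 + δ)] at hle
  nlinarith

lemma min_unique (ψ : Module.Basis (Fin N) ℝ (Euc N)) {τ : ℝ} {f : Euc N → ℝ} (hf : GoodNorm f)
    {u v w : Euc N} (hv : v ∈ cube0 ψ τ) (hw : w ∈ cube0 ψ τ)
    (hminv : IsMinOn (fun p => f (p - u)) (cube0 ψ τ) v)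
    (hminw : IsMinOn (fun p => f (p - u)) (cube0 ψ τ) w) : v = w := by
  have hn : IsNormLike f := ⟨hf.add_le, hf.smul_eq, hf.eq_zero_iff⟩
  have h1 : f (v - u) ≤ f (w - u) := isMinOn_iff.mp hminv w hw
  have h2 : f (w - u) ≤ f (v - u) := isMinOn_iff.mp hminw v hv
  set m := f (v - u) with hm
  have hmw : f (w - u) = m := le_antisymm h2 h1
  rcases eq_or_lt_of_le (nl_nonneg hn (v - u)) with hm0 | hmpos
  · have hv0 : v - u = 0 := (hn.eq_zero_iff _).mp hm0.symm
    have hw0 : w - u = 0 := (hn.eq_zero_iff _).mp (by rw [hmw]; exact hm.trans hm0.symm)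
    rw [sub_eq_zero] at hv0 hw0
    rw [hv0, hw0]
  · by_contra hvw
    set a := m⁻¹ • (v - u) with hadef
    set b := m⁻¹ • (w - u) with hbdef
    have hma : f a = 1 := by
      rw [hadef, hn.smul_eq, abs_of_pos (inv_pos.mpr hmpos), ← hm, inv_mul_cancel₀ hmpos.ne']
    have hmb : f b = 1 := by
      rw [hbdef, hn.smul_eq, abs_of_pos (inv_pos.mpr hmpos), hmw, inv_mul_cancel₀ hmpos.ne']
    have hab : a ≠ b := by
      intro h
      apply hvw
      rw [hadef, hbdef] at h
      have heq := smul_right_injective (Euc N) (inv_ne_zero hmpos.ne') h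
      exact sub_left_inj.mp heq
    have hamem : a ∈ {x : Euc N | f x ≤ 1} := by
      simp only [Set.mem_setOf_eq, hma]; exact le_refl 1
    have hbmem : b ∈ {x : Euc N | f x ≤ 1} := by
      simp only [Set.mem_setOf_eq, hmb]; exact le_refl 1
    have hmid := hf.sconv hamem hbmem hab (by norm_num : (0:ℝ) < 1/2)
      (by norm_num : (0:ℝ) < 1/2) (by norm_num)
    have hlt := interior_ball_lt hn hmid
    set p := (1/2 : ℝ) • v + (1/2 : ℝ) • w with hpdef
    have hp : p ∈ cube0 ψ τ :=
      cube0_convex ψ τ hv hw (by norm_num) (by norm_num) (by norm_num)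
    have hma' : m • a = v - u := by
      rw [hadef, smul_smul, mul_inv_cancel₀ hmpos.ne', one_smul]
    have hmb' : m • b = w - u := by
      rw [hbdef, smul_smul, mul_inv_cancel₀ hmpos.ne', one_smul]
    have heq : p - u = m • ((1/2:ℝ) • a + (1/2:ℝ) • b) := by
      rw [smul_add, smul_comm m ((1/2:ℝ)) a, smul_comm m ((1/2:ℝ)) b, hma', hmb', hpdef]
      module
    have hplt : f (p - u) < m := by
      rw [heq, hn.smul_eq, abs_of_pos hmpos]
      nlinarith
    have hple := isMinOn_iff.mp hminv p hp
    rw [← hm] at hple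
    linarith

lemma sol_eq_iff (ψ : Module.Basis (Fin N) ℝ (Euc N)) {τ : ℝ} {f : Euc N → ℝ}
    {sol : Euc N → Euc N} (hf : GoodNorm f) (hsol : IsSol ψ τ f sol)
    {us : Euc N} (husm : us ∈ cube0 ψ τ) (u : Euc N) :
    sol u = us ↔ IsMinOn (fun p => f (p - u)) (cube0 ψ τ) us := by
  constructor
  · rintro rfl; exact (hsol u).2
  · intro hmin
    exact min_unique ψ hf (hsol u).1 husm (hsol u).2 hmin

end StmtFourHelpers

set_option maxHeartbeats 1000000

/-- if `f` is curved then `SSAT({u*},{1})` is nonempty and compact. -/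
theorem stmt4 {N : ℕ} (hN : 1 ≤ N) (ψ : Module.Basis (Fin N) ℝ (Euc N)) (τ : ℝ) (hτ : 0 < τ)
    (f : Euc N → ℝ) (hf : GoodNorm f) (hcurved : Curved f)
    (fd : Euc N → ℝ) (hfd : IsNormLike fd)
    (sol : Euc N → Euc N) (hsol : IsSol ψ τ f sol)
    (us : Euc N) (hus : us ∈ frontier (cube0 ψ τ)) :
    (SSAT sol fd {us} ({1} : Set ℝ)).Nonempty ∧ IsCompact (SSAT sol fd {us} ({1} : Set ℝ)) := by
  classical
  have hn : IsNormLike f := ⟨hf.add_le, hf.smul_eq, hf.eq_zero_iff⟩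
  have hnd : IsNormLike fd := ⟨hfd.add_le, hfd.smul_eq, hfd.eq_zero_iff⟩
  have husm : us ∈ cube0 ψ τ := frontier_mem_cube0 hus
  obtain ⟨i, hi⟩ := frontier_saturated ψ hus
  set ε : ℝ := if ψ.repr us i = τ/2 then 1 else -1 with hε
  have hε1 : ε = 1 ∨ ε = -1 := by rw [hε]; split <;> simp
  set φ : Euc N → ℝ := fun v => ε * ψ.repr v i with hφ
  have hφadd : ∀ y z : Euc N, φ (y + z) = φ y + φ z := by
    intro y z
    show ε * ψ.repr (y + z) i = ε * ψ.repr y i + ε * ψ.repr z i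
    rw [map_add, Finsupp.add_apply]; ring
  have hφsub : ∀ y z : Euc N, φ (y - z) = φ y - φ z := by
    intro y z
    show ε * ψ.repr (y - z) i = ε * ψ.repr y i - ε * ψ.repr z i
    rw [map_sub, Finsupp.sub_apply]; ring
  have hφsmul : ∀ (c : ℝ) (y : Euc N), φ (c • y) = c * φ y := by
    intro c y
    show ε * ψ.repr (c • y) i = c * (ε * ψ.repr y i)
    rw [_root_.map_smul, Finsupp.smul_apply, smul_eq_mul]; ring
  have hφus : φ us = τ / 2 := by
    show ε * ψ.repr us i = τ / 2
    rw [hε]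
    split
    · next h => rw [h, one_mul]
    · next h =>
        rcases hi with h' | h'
        · exact absurd h' h
        · rw [h']; ring
  have hφsupp : ∀ v ∈ cube0 ψ τ, φ v ≤ τ/2 := by
    intro v hv
    have hb := (mem_cube0_iff ψ τ v).mp hv i
    show ε * ψ.repr v i ≤ τ/2
    rcases hε1 with h | h <;> rw [h] <;> linarith [hb.1, hb.2]
  have hfc : Continuous f := nl_continuous ψ hn
  obtain ⟨c, hc, hcl⟩ := nl_lower hN ψ hn
  set K : Set (Euc N) := {x | f x ≤ 1} with hK
  have hKclosed : IsClosed K := isClosed_le hfc continuous_const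
  have hKsub : K ⊆ Metric.closedBall 0 (1/c) := by
    intro x hx
    have hx' : f x ≤ 1 := hx
    rw [Metric.mem_closedBall, dist_zero_right, le_div_iff₀ hc]
    nlinarith [hcl x]
  have hKcompact : IsCompact K :=
    (isCompact_closedBall (0 : Euc N) (1/c)).of_isClosed_subset hKclosed hKsub
  have hφcont : Continuous φ := continuous_const.mul (repr_continuous ψ i)
  have hK0 : (0 : Euc N) ∈ K := by
    show f 0 ≤ 1
    rw [nl_zero hn]; norm_num
  obtain ⟨x, hxK, hxmax⟩ := hKcompact.exists_isMaxOn ⟨0, hK0⟩ hφcont.continuousOn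
  have hxmax' : ∀ y ∈ K, φ y ≤ φ x := fun y hy => isMaxOn_iff.mp hxmax y hy
  have hψi : 0 < f (ψ i) := nl_pos hn (ψ.ne_zero i)
  have habsε : |ε| = 1 := by rcases hε1 with h | h <;> rw [h] <;> norm_num
  set z : Euc N := (f (ψ i))⁻¹ • (ε • ψ i) with hz
  have hzK : z ∈ K := by
    show f z ≤ 1
    rw [hz, hn.smul_eq, hn.smul_eq, habsε, abs_of_pos (inv_pos.mpr hψi), one_mul,
      inv_mul_cancel₀ hψi.ne']
  have hrepr : ψ.repr z i = (f (ψ i))⁻¹ * ε := by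
    rw [hz]
    simp [_root_.map_smul, Module.Basis.repr_self]
  have hφz : φ z = (f (ψ i))⁻¹ := by
    show ε * ψ.repr z i = _
    rw [hrepr]
    rcases hε1 with h | h <;> rw [h] <;> ring
  have hφxpos : 0 < φ x := by
    have h1 := hxmax' _ hzK
    rw [hφz] at h1
    have h2 := inv_pos.mpr hψi
    linarith
  have hxne : x ≠ 0 := by
    intro h
    rw [h] at hφxpos
    have : φ 0 = 0 := by
      show ε * ψ.repr (0 : Euc N) i = 0
      simp
    rw [this] at hφxpos
    exact lt_irrefl 0 hφxpos
  have hxK' : f x ≤ 1 := hxK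
  have hfx1 : f x = 1 := by
    rcases lt_or_eq_of_le hxK' with hlt | heq
    · exfalso
      have hfxpos : 0 < f x := nl_pos hn hxne
      have hx'K : (f x)⁻¹ • x ∈ K := by
        show f ((f x)⁻¹ • x) ≤ 1
        rw [hn.smul_eq, abs_of_pos (inv_pos.mpr hfxpos), inv_mul_cancel₀ hfxpos.ne']
      have h1 : φ ((f x)⁻¹ • x) = (f x)⁻¹ * φ x := hφsmul _ _
      have h2 := hxmax' _ hx'K
      rw [h1] at h2
      have h3 : 1 < (f x)⁻¹ := by
        have h4 := mul_lt_mul_of_pos_left hlt (inv_pos.mpr hfxpos)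
        rwa [inv_mul_cancel₀ hfxpos.ne', mul_one] at h4
      nlinarith
    · exact heq
  have hfdx : 0 < fd x := nl_pos hnd hxne
  set s : ℝ := (fd x)⁻¹ with hs
  have hspos : 0 < s := inv_pos.mpr hfdx
  set u : Euc N := us + s • x with hu
  have hmin : IsMinOn (fun p => f (p - u)) (cube0 ψ τ) us := by
    rw [isMinOn_iff]
    intro v hv
    show f (us - u) ≤ f (v - u)
    have h0 : f (us - u) = s := by
      have he : us - u = -(s • x) := by rw [hu]; abel
      rw [he, nl_neg hn, hn.smul_eq, abs_of_pos hspos, hfx1, mul_one]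
    rw [h0]
    by_contra hcon
    push_neg at hcon
    set w : Euc N := u - v with hw
    have hsym : f (v - u) = f w := by
      rw [hw, show v - u = -(u - v) by abel, nl_neg hn]
    have hfw : f w < s := by rw [← hsym]; exact hcon
    have hwdec : w = (us - v) + s • x := by rw [hw, hu]; abel
    have hφw : φ w = φ (us - v) + s * φ x := by
      rw [hwdec, hφadd, hφsmul]
    have hφusv : 0 ≤ φ (us - v) := by
      rw [hφsub, hφus]
      have := hφsupp v hv
      linarith
    have hwne : w ≠ 0 := by
      intro h
      have huv : u = v := by rwa [hw, sub_eq_zero] at h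
      have hle := hφsupp v hv
      rw [← huv] at hle
      have hφu : φ u = τ/2 + s * φ x := by
        rw [hu, hφadd, hφsmul, hφus]
      rw [hφu] at hle
      nlinarith
    have hfwpos : 0 < f w := nl_pos hn hwne
    have hw'K : (f w)⁻¹ • w ∈ K := by
      show f ((f w)⁻¹ • w) ≤ 1
      rw [hn.smul_eq, abs_of_pos (inv_pos.mpr hfwpos), inv_mul_cancel₀ hfwpos.ne']
    have h2 := hxmax' _ hw'K
    rw [hφsmul] at h2
    have hφw_ge : s * φ x ≤ φ w := by rw [hφw]; linarith
    have hinv : 1 < (f w)⁻¹ * s := by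
      have h4 := mul_lt_mul_of_pos_left hfw (inv_pos.mpr hfwpos)
      rwa [inv_mul_cancel₀ hfwpos.ne'] at h4
    have hA : (f w)⁻¹ * (s * φ x) ≤ (f w)⁻¹ * φ w :=
      mul_le_mul_of_nonneg_left hφw_ge (inv_pos.mpr hfwpos).le
    have hB := mul_lt_mul_of_pos_right hinv hφxpos
    rw [one_mul] at hB
    linarith
  have hsolu : sol u = us := (sol_eq_iff ψ hf hsol husm u).mpr hmin
  have hne : u ∈ SSAT sol fd {us} ({1} : Set ℝ) := by
    refine ⟨by rw [hsolu]; exact rfl, ?_⟩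
    show fd (u - sol u) ∈ ({1} : Set ℝ)
    rw [hsolu, Set.mem_singleton_iff]
    have he : u - us = s • x := by rw [hu]; abel
    rw [he, hfd.smul_eq, abs_of_pos hspos, hs, inv_mul_cancel₀ hfdx.ne']
  obtain ⟨cd, hcd, hcdl⟩ := nl_lower hN ψ hnd
  have hSeq : SSAT sol fd {us} ({1} : Set ℝ)
      = {p : Euc N | ∀ v ∈ cube0 ψ τ, f (us - p) ≤ f (v - p)} ∩ {p | fd (p - us) = 1} := by
    ext p
    simp only [SSAT, Set.mem_setOf_eq, Set.mem_singleton_iff, Set.mem_inter_iff]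
    constructor
    · rintro ⟨h1, h2⟩
      refine ⟨fun v hv => isMinOn_iff.mp ((sol_eq_iff ψ hf hsol husm p).mp h1) v hv, ?_⟩
      rwa [h1] at h2
    · rintro ⟨h1, h2⟩
      have hmin' : IsMinOn (fun q => f (q - p)) (cube0 ψ τ) us := isMinOn_iff.mpr h1
      have h3 := (sol_eq_iff ψ hf hsol husm p).mpr hmin'
      exact ⟨h3, by rwa [h3]⟩
  have hSclosed : IsClosed (SSAT sol fd {us} ({1} : Set ℝ)) := by
    rw [hSeq]
    apply IsClosed.inter
    · have heq2 : {p : Euc N | ∀ v ∈ cube0 ψ τ, f (us - p) ≤ f (v - p)}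
          = ⋂ v ∈ cube0 ψ τ, {p : Euc N | f (us - p) ≤ f (v - p)} := by
        ext p; simp
      rw [heq2]
      refine isClosed_biInter fun v hv => ?_
      exact isClosed_le (hfc.comp (continuous_const.sub continuous_id))
        (hfc.comp (continuous_const.sub continuous_id))
    · exact isClosed_eq ((nl_continuous ψ hnd).comp (continuous_id.sub continuous_const))
        continuous_const
  have hSsub : SSAT sol fd {us} ({1} : Set ℝ) ⊆ Metric.closedBall us (1/cd) := by
    intro p hp
    obtain ⟨h1, h2⟩ := hp
    have h1' : sol p = us := h1
    have h2' : fd (p - sol p) = 1 := h2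
    rw [h1'] at h2'
    rw [Metric.mem_closedBall, dist_eq_norm, le_div_iff₀ hcd]
    nlinarith [hcdl (p - us)]
  exact ⟨⟨u, hne⟩,
    (isCompact_closedBall us (1/cd)).of_isClosed_subset hSclosed hSsub⟩
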